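/- Let (ω_0,...,ω_{n+1}) be a key sequence with n ≥ 1. Then ω_{k} < p_{k-1}·p_{k-2}·...·p_1·ω_1 ≤ ω_0·ω_1 for all 2 ≤ k ≤ n+1; in particular every entry of a key sequence is strictly less than ω_0·ω_1 + max(ω_0, ω_1) (a uniform bound in terms of the first two entries). -/

import Mathlib

/-- For a key sequence (ω₀,...,ω_{n+1}) with n ≥ 1:
ω_k < p_{k-1}···p_1·ω_1 ≤ ω₀·ω₁ for 2 ≤ k ≤ n+1; in particular every entry is
strictly less than ω₀·ω₁ + max(ω₀, ω₁). -/
theorem statement13 (n : ℕ) (hn : 1 ≤ n) (ω : ℕ → ℕ)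
    (hpos : ∀ k ≤ n + 1, 0 < ω k)
    (d p : ℕ → ℕ)
    (hd : ∀ k, d k = (Finset.range (k + 1)).gcd ω)
    (hp : ∀ k, 1 ≤ k → p k = d (k - 1) / d k)
    (hgcd : d (n + 1) = 1)
    (hkey : ∀ k, 1 ≤ k → k ≤ n → ω (k + 1) < p k * ω k) :
    (∀ k, 2 ≤ k → k ≤ n + 1 →
      ω k < (∏ j ∈ Finset.Icc 1 (k - 1), p j) * ω 1 ∧
      (∏ j ∈ Finset.Icc 1 (k - 1), p j) * ω 1 ≤ ω 0 * ω 1) ∧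
    (∀ k, k ≤ n + 1 → ω k < ω 0 * ω 1 + max (ω 0) (ω 1)) := by
  have hpos0 : 0 < ω 0 := hpos 0 (by omega)
  have hpos1 : 0 < ω 1 := hpos 1 (by omega)
  have hdmem : ∀ k, d k ∣ ω 0 := by
    intro k; rw [hd k]
    exact Finset.gcd_dvd (Finset.mem_range.mpr (by omega))
  have hdpos : ∀ k, 0 < d k := by
    intro k
    rcases Nat.eq_zero_or_pos (d k) with h | h
    · exfalso
      have := hdmem k
      rw [h] at this
      have := Nat.eq_zero_of_zero_dvd this
      omega
    · exact h
  have hddvd : ∀ k, d (k + 1) ∣ d k := by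
    intro k
    rw [hd (k + 1), hd k, Finset.range_add_one, Finset.gcd_insert]
    exact gcd_dvd_right _ _
  have hpmul : ∀ k, 1 ≤ k → p k * d k = d (k - 1) := by
    intro k hk
    rw [hp k hk]
    refine Nat.div_mul_cancel ?_
    have := hddvd (k - 1)
    rwa [Nat.sub_add_cancel hk] at this
  have hd0 : d 0 = ω 0 := by rw [hd 0]; simp
  have hprod : ∀ m, (∏ j ∈ Finset.Icc 1 m, p j) * d m = d 0 := by
    intro m
    induction m with
    | zero => simp
    | succ m ih =>
      rw [Finset.prod_Icc_succ_top (by omega), mul_assoc]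
      have := hpmul (m + 1) (by omega)
      simp only [Nat.add_sub_cancel] at this
      rw [this, ih]
  have hprodle : ∀ m, (∏ j ∈ Finset.Icc 1 m, p j) ≤ ω 0 := by
    intro m
    have h := hprod m
    have := Nat.le_mul_of_pos_right (∏ j ∈ Finset.Icc 1 m, p j) (hdpos m)
    omega
  have hmain : ∀ k, 2 ≤ k → k ≤ n + 1 →
      ω k < (∏ j ∈ Finset.Icc 1 (k - 1), p j) * ω 1 := by
    intro k hk
    induction k, hk using Nat.le_induction with
    | base => intro _; simpa using hkey 1 le_rfl hn
    | succ k hk ih =>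
      intro hkn
      have h2 := ih (by omega)
      have hk1 : k - 1 + 1 = k := by omega
      calc ω (k + 1) < p k * ω k := hkey k (by omega) (by omega)
        _ ≤ p k * ((∏ j ∈ Finset.Icc 1 (k - 1), p j) * ω 1) :=
            Nat.mul_le_mul_left _ (le_of_lt h2)
        _ = (∏ j ∈ Finset.Icc 1 (k + 1 - 1), p j) * ω 1 := by
            rw [show k + 1 - 1 = k from rfl, ← hk1,
              Finset.prod_Icc_succ_top (by omega), hk1]
            ring
  constructor
  · intro k hk2 hkn
    refine ⟨hmain k hk2 hkn, ?_⟩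
    exact Nat.mul_le_mul_right _ (hprodle (k - 1))
  · intro k hkn
    have hmul : 0 < ω 0 * ω 1 := Nat.mul_pos hpos0 hpos1
    rcases Nat.lt_or_ge k 2 with h | h
    · have e0 : ω 0 ≤ ω 0 * ω 1 := Nat.le_mul_of_pos_right _ hpos1
      have e1 : ω 1 ≤ ω 0 * ω 1 := Nat.le_mul_of_pos_left _ hpos0
      interval_cases k <;> omega
    · have h1 := hmain k h hkn
      have h2 := Nat.mul_le_mul_right (ω 1) (hprodle (k - 1))
      omega
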